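/- If the smoothness indicators satisfy I_k = O(h²) and I_k − I_{k'} = O(h^{r+1}) for all k, k' (smooth case), ε = h², and t > 0, then the nonlinear weight ω_k = α_k / Σ_l α_l with α_k = C_k / (ε + I_k)^t satisfies ω_k − C_k = O(h^{r-1}), assuming the linear weights C_k > 0 sum to 1. -/

import Mathlib

lemma rpow_lip_aux (t : ℝ) (ht : 0 < t) :
    ∀ s : ℝ, 1/2 ≤ s → s ≤ 2 → |s ^ t - 1| ≤ (t * (2 ^ t * 2)) * |s - 1| := by
  intro s hs1 hs2
  have hconv : Convex ℝ (Set.Icc (1/2:ℝ) 2) := convex_Icc _ _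
  have hder : ∀ x ∈ Set.Icc (1/2:ℝ) 2,
      HasDerivWithinAt (fun x : ℝ => x ^ t) (t * x ^ (t-1)) (Set.Icc (1/2:ℝ) 2) x := by
    intro x hx
    exact (Real.hasDerivAt_rpow_const (Or.inl (by linarith [hx.1]))).hasDerivWithinAt
  have hbound : ∀ x ∈ Set.Icc (1/2:ℝ) 2, ‖t * x ^ (t-1)‖ ≤ t * (2 ^ t * 2) := by
    intro x hx
    have hx0 : (0:ℝ) < x := by linarith [hx.1]
    have h1 : x ^ (t-1) = x ^ t / x := by
      rw [Real.rpow_sub hx0, Real.rpow_one]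
    have h2 : x ^ t ≤ 2 ^ t := Real.rpow_le_rpow hx0.le hx.2 ht.le
    have h3 : x ^ t / x ≤ 2 ^ t / (1/2) := div_le_div₀ (by positivity) h2 (by norm_num) hx.1
    have h4 : (2:ℝ) ^ t / (1/2) = 2 ^ t * 2 := by ring
    rw [norm_mul, Real.norm_eq_abs, Real.norm_eq_abs, abs_of_pos ht,
      abs_of_pos (Real.rpow_pos_of_pos hx0 _)]
    have h5 : x ^ (t-1) ≤ 2 ^ t * 2 := by rw [h1]; linarith
    nlinarith
  have hmem1 : (1:ℝ) ∈ Set.Icc (1/2:ℝ) 2 := by constructor <;> norm_num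
  have hmems : s ∈ Set.Icc (1/2:ℝ) 2 := ⟨hs1, hs2⟩
  have := hconv.norm_image_sub_le_of_norm_hasDerivWithin_le hder hbound hmem1 hmems
  simpa [Real.one_rpow, Real.norm_eq_abs] using this

/-- In the smooth case (`I_k = O(h²)` and `I_k − I_{k'} = O(h^{r+1})`), with `ε = h²`
and `t > 0`, the nonlinear weights satisfy `ω_k − C_k = O(h^{r-1})`: there exist `M`
and `h₀ > 0` such that for all `0 < h < h₀` and all `k`, `|ω_k − C_k| ≤ M·h^{r-1}`. -/
theorem nonlinear_weights_accuracy {ι : Type*} [Fintype ι] [Nonempty ι]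
    (r : ℕ) (hr : 2 ≤ r) (t : ℝ) (ht : 0 < t)
    (C : ι → ℝ) (hC : ∀ k, 0 < C k) (hCsum : ∑ k, C k = 1)
    (A B : ℝ) (hA : 0 < A) (hB : 0 < B)
    (Ism : ℝ → ι → ℝ)
    (hI0 : ∀ h > (0 : ℝ), ∀ k, 0 ≤ Ism h k)
    (hI1 : ∀ h > (0 : ℝ), ∀ k, Ism h k ≤ A * h ^ 2)
    (hI2 : ∀ h > (0 : ℝ), ∀ k k', |Ism h k - Ism h k'| ≤ B * h ^ (r + 1)) :
    ∃ M h₀ : ℝ, 0 < h₀ ∧ ∀ h : ℝ, 0 < h → h < h₀ → ∀ k,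
      |(C k / (h ^ 2 + Ism h k) ^ t) / (∑ l, C l / (h ^ 2 + Ism h l) ^ t) - C k|
        ≤ M * h ^ (r - 1) := by
  set L : ℝ := t * (2 ^ t * 2) with hLdef
  have hL : 0 < L := by positivity
  have hhalf : (0:ℝ) < (1/2:ℝ) ^ t := Real.rpow_pos_of_pos (by norm_num) t
  refine ⟨L * B / ((1/2:ℝ) ^ t), min 1 (1/(2*B)), lt_min one_pos (by positivity), ?_⟩
  intro h hh hh₀ k
  have hh1 : h < 1 := lt_of_lt_of_le hh₀ (min_le_left _ _)
  have hhB : h < 1/(2*B) := lt_of_lt_of_le hh₀ (min_le_right _ _)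
  set δ : ℝ := B * h ^ (r - 1) with hδdef
  have hδpos : 0 < δ := by positivity
  have hpow_le : h ^ (r - 1) ≤ h := by
    apply pow_le_of_le_one hh.le hh1.le
    omega
  have hδhalf : δ ≤ 1/2 := by
    have h1 : B * h ≤ 1/2 := by
      rw [lt_div_iff₀ (by positivity)] at hhB
      nlinarith
    have h2 := mul_le_mul_of_nonneg_left hpow_le hB.le
    linarith
  have hx : ∀ l, 0 < h ^ 2 + Ism h l := fun l => by
    have := hI0 h hh l; positivity
  -- ratio bounds
  have hratio : ∀ l, |(h ^ 2 + Ism h k) / (h ^ 2 + Ism h l) - 1| ≤ δ := by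
    intro l
    have hd : |Ism h k - Ism h l| ≤ B * h ^ (r + 1) := hI2 h hh k l
    have hsplit : h ^ (r + 1) = h ^ (r - 1) * h ^ 2 := by
      rw [← pow_add]; congr 1; omega
    have hd2 : |Ism h k - Ism h l| ≤ δ * (h ^ 2 + Ism h l) := by
      calc |Ism h k - Ism h l| ≤ B * h ^ (r + 1) := hd
        _ = δ * h ^ 2 := by rw [hsplit, hδdef]; ring
        _ ≤ δ * (h ^ 2 + Ism h l) := by
            have := hI0 h hh l; nlinarith
    have heq : (h ^ 2 + Ism h k) / (h ^ 2 + Ism h l) - 1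
        = (Ism h k - Ism h l) / (h ^ 2 + Ism h l) := by
      rw [div_sub_one (hx l).ne']
      congr 1
      ring
    rw [heq, abs_div, abs_of_pos (hx l), div_le_iff₀ (hx l)]
    exact hd2
  have hs_half : ∀ l, 1/2 ≤ (h ^ 2 + Ism h k) / (h ^ 2 + Ism h l) := by
    intro l
    have := abs_le.mp (hratio l)
    linarith [this.1]
  have hs_two : ∀ l, (h ^ 2 + Ism h k) / (h ^ 2 + Ism h l) ≤ 2 := by
    intro l
    have := abs_le.mp (hratio l)
    linarith [this.2]
  -- rpow of ratio
  set ρ : ι → ℝ := fun l => ((h ^ 2 + Ism h k) / (h ^ 2 + Ism h l)) ^ t with hρdef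
  have hρ1 : ∀ l, |ρ l - 1| ≤ L * δ := by
    intro l
    calc |ρ l - 1| ≤ L * |(h ^ 2 + Ism h k) / (h ^ 2 + Ism h l) - 1| :=
          rpow_lip_aux t ht _ (hs_half l) (hs_two l)
      _ ≤ L * δ := by
          have := hratio l
          nlinarith
  have hρlow : ∀ l, (1/2:ℝ) ^ t ≤ ρ l := fun l =>
    Real.rpow_le_rpow (by norm_num) (hs_half l) ht.le
  set T : ℝ := ∑ l, C l * ρ l with hTdef
  have hT1 : |T - 1| ≤ L * δ := by
    have hsum1 : ∑ l, C l * (ρ l - 1) = T - 1 := by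
      simp only [mul_sub, mul_one, Finset.sum_sub_distrib, hCsum, hTdef]
    rw [← hsum1]
    calc |∑ l, C l * (ρ l - 1)| ≤ ∑ l, |C l * (ρ l - 1)| := Finset.abs_sum_le_sum_abs _ _
      _ ≤ ∑ l, C l * (L * δ) := by
          apply Finset.sum_le_sum
          intro l _
          rw [abs_mul, abs_of_pos (hC l)]
          exact mul_le_mul_of_nonneg_left (hρ1 l) (hC l).le
      _ = L * δ := by rw [← Finset.sum_mul, hCsum, one_mul]
  have hT2 : (1/2:ℝ) ^ t ≤ T := by
    calc (1/2:ℝ) ^ t = ∑ l, C l * (1/2:ℝ) ^ t := by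
          rw [← Finset.sum_mul, hCsum, one_mul]
      _ ≤ T := Finset.sum_le_sum fun l _ =>
          mul_le_mul_of_nonneg_left (hρlow l) (hC l).le
  have hTpos : 0 < T := lt_of_lt_of_le hhalf hT2
  -- rewrite the weight as C k / T
  have hxk : 0 < (h ^ 2 + Ism h k) ^ t := Real.rpow_pos_of_pos (hx k) t
  have hkey : (C k / (h ^ 2 + Ism h k) ^ t) / (∑ l, C l / (h ^ 2 + Ism h l) ^ t)
      = C k / T := by
    have hTeq : T = (h ^ 2 + Ism h k) ^ t * ∑ l, C l / (h ^ 2 + Ism h l) ^ t := by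
      rw [hTdef, Finset.mul_sum]
      refine Finset.sum_congr rfl fun l _ => ?_
      simp only [hρdef]
      rw [Real.div_rpow (hx k).le (hx l).le]
      have hxl : ((h ^ 2 + Ism h l) ^ t : ℝ) ≠ 0 := (Real.rpow_pos_of_pos (hx l) t).ne'
      field_simp
    rw [div_div, ← hTeq]
  rw [hkey]
  -- final estimate
  have hCk1 : C k ≤ 1 := by
    rw [← hCsum]
    exact Finset.single_le_sum (fun i _ => (hC i).le) (Finset.mem_univ k)
  have heq2 : C k / T - C k = C k * (1 - T) / T := by
    field_simp
  rw [heq2, abs_div, abs_of_pos hTpos, abs_mul, abs_of_pos (hC k)]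
  have hnum : C k * |1 - T| ≤ L * δ := by
    have : |1 - T| ≤ L * δ := by rw [abs_sub_comm]; exact hT1
    nlinarith [abs_nonneg (1 - T)]
  calc C k * |1 - T| / T ≤ (L * δ) / ((1/2:ℝ) ^ t) :=
        div_le_div₀ (by positivity) hnum hhalf hT2
      _ = L * B / ((1/2:ℝ) ^ t) * h ^ (r - 1) := by
        rw [hδdef]; ring
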